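/- If (t_n) ⊆ [0,1) with t_n → 1 and x_{t_n} are the corresponding fixed points of t_n T (with ‖T x_{t_n}‖ ≤ M for all n), then (x_{t_n}) is a Cauchy sequence. -/

import Mathlib

open Filter Topology

/-- If `t_n → 1⁻` and `x_{t_n}` are fixed points of `t_n T` with
`‖T x_{t_n}‖ ≤ M`, then `(x_{t_n})` is Cauchy. -/
theorem stmt_16 {Y : Type*} [NormedAddCommGroup Y] [NormedSpace ℝ Y]
    (G : Set Y) (T : Y → Y) (φ : ℝ → ℝ)
    (hφmono : AntitoneOn φ (Set.Ici 0))
    (hφrange : ∀ s ≥ (0:ℝ), φ s ∈ Set.Icc (0:ℝ) 1)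
    (hφlt : ∀ s > (0:ℝ), φ s < 1)
    (hT : ∀ x ∈ closure G, ∀ y ∈ closure G, ‖T x - T y‖ ≤ φ ‖x - y‖ * ‖x - y‖)
    (t : ℕ → ℝ) (ht : ∀ n, t n ∈ Set.Ico (0:ℝ) 1)
    (htlim : Tendsto t atTop (𝓝 1))
    (x : ℕ → Y) (hx : ∀ n, x n ∈ closure G)
    (hfix : ∀ n, t n • T (x n) = x n)
    (M : ℝ) (hM : ∀ n, ‖T (x n)‖ ≤ M) :
    CauchySeq x := by
  have hM' : ∀ n, ‖T (x n)‖ ≤ max M 1 := fun n => (hM n).trans (le_max_left _ _)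
  set M' := max M 1 with hM'def
  have hM'pos : (0:ℝ) < M' := lt_of_lt_of_le one_pos (le_max_right _ _)
  rw [Metric.cauchySeq_iff]
  intro ε hε
  have hφε1 : φ ε < 1 := hφlt ε hε
  have hφε0 : 0 ≤ φ ε := (hφrange ε hε.le).1
  set δ := (1 - φ ε) * ε / M' with hδ
  have hδpos : 0 < δ := div_pos (mul_pos (by linarith) hε) hM'pos
  obtain ⟨N, hN⟩ := Metric.cauchySeq_iff.mp htlim.cauchySeq δ hδpos
  refine ⟨N, fun m hm n hn => ?_⟩
  by_contra hcon
  push_neg at hcon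
  set d := dist (x m) (x n) with hd
  have hεd : ε ≤ d := hcon
  have hd0 : 0 < d := lt_of_lt_of_le hε hεd
  have hφd : φ d ≤ φ ε := hφmono (Set.mem_Ici.mpr hε.le) (Set.mem_Ici.mpr hd0.le) hεd
  have htm := ht m
  have key : d ≤ φ ε * d + M' * dist (t m) (t n) := by
    have h1 : x m - x n = (t m) • (T (x m) - T (x n)) + (t m - t n) • T (x n) := by
      rw [smul_sub, sub_smul]
      rw [hfix m, hfix n]
      abel
    have h2 : d = ‖x m - x n‖ := dist_eq_norm _ _
    have hTnorm : ‖T (x m) - T (x n)‖ ≤ φ d * d := by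
      have := hT (x m) (hx m) (x n) (hx n)
      rwa [h2]
    calc d = ‖(t m) • (T (x m) - T (x n)) + (t m - t n) • T (x n)‖ := by rw [h2, h1]
      _ ≤ ‖(t m) • (T (x m) - T (x n))‖ + ‖(t m - t n) • T (x n)‖ := norm_add_le _ _
      _ = |t m| * ‖T (x m) - T (x n)‖ + |t m - t n| * ‖T (x n)‖ := by
          rw [norm_smul, norm_smul, Real.norm_eq_abs, Real.norm_eq_abs]
      _ ≤ 1 * (φ d * d) + dist (t m) (t n) * M' := by
          have h3 : |t m| ≤ 1 := abs_le.mpr ⟨by linarith [htm.1], htm.2.le⟩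
          have h4 : |t m - t n| = dist (t m) (t n) := (Real.dist_eq _ _).symm
          rw [h4]
          have i1 : |t m| * ‖T (x m) - T (x n)‖ ≤ 1 * (φ d * d) :=
            mul_le_mul h3 hTnorm (norm_nonneg _) one_pos.le
          have i2 : dist (t m) (t n) * ‖T (x n)‖ ≤ dist (t m) (t n) * M' :=
            mul_le_mul_of_nonneg_left (hM' n) dist_nonneg
          linarith
      _ ≤ φ ε * d + M' * dist (t m) (t n) := by
          have : φ d * d ≤ φ ε * d := by nlinarith
          linarith [mul_comm (dist (t m) (t n)) M']
  have hdist : dist (t m) (t n) < δ := hN m hm n hn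
  have hMδ : M' * δ = (1 - φ ε) * ε := by
    rw [hδ]; field_simp [hM'pos.ne']
  nlinarith [mul_le_mul_of_nonneg_left hdist.le hM'pos.le]
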